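/- The inverse of a Pascal finite polynomial automorphism is Pascal finite: if F is a polynomial automorphism of K^n with Δ_F^m(Id) = 0, then G = F⁻¹ satisfies Δ_G^{m'}(Id) = 0 for some m'. -/

import Mathlib

open MvPolynomial Finset

/-- Composition `P ∘ F` of polynomial maps of `K^n`. -/
noncomputable def PolyMap.comp {K : Type*} [CommRing K] {n : ℕ}
    (P F : Fin n → MvPolynomial (Fin n) K) : Fin n → MvPolynomial (Fin n) K :=
  fun i => bind₁ F (P i)

/-- The identity polynomial map. -/
noncomputable def PolyMap.id (K : Type*) [CommRing K] (n : ℕ) :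
    Fin n → MvPolynomial (Fin n) K :=
  fun i => X i

/-- The Pascal difference operator `Δ_F P = P ∘ F − P`. -/
noncomputable def Δ {K : Type*} [CommRing K] {n : ℕ}
    (F P : Fin n → MvPolynomial (Fin n) K) : Fin n → MvPolynomial (Fin n) K :=
  fun i => bind₁ F (P i) - P i

/-- `F` is Pascal finite if some iterate of `Δ_F` kills the identity map. -/
def IsPascalFinite {K : Type*} [CommRing K] {n : ℕ}
    (F : Fin n → MvPolynomial (Fin n) K) : Prop :=
  ∃ m : ℕ, 0 < m ∧ (Δ F)^[m] (PolyMap.id K n) = 0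

/-- Compositional powers of a polynomial map. -/
noncomputable def PolyMap.pow {K : Type*} [CommRing K] {n : ℕ}
    (F : Fin n → MvPolynomial (Fin n) K) : ℕ → (Fin n → MvPolynomial (Fin n) K)
  | 0 => PolyMap.id K n
  | (l + 1) => PolyMap.comp (PolyMap.pow F l) F

lemma end_sub_one_factor {R M : Type*} [CommRing R] [AddCommGroup M] [Module R M]
    (f g : Module.End R M) (h : g * f = 1) : g - 1 = (-g) * (f - 1) := by
  rw [neg_mul, mul_sub, h, mul_one, neg_sub]

lemma delta_iter {K : Type*} [CommRing K] {n : ℕ}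
    (H : Fin n → MvPolynomial (Fin n) K) (m : ℕ)
    (P : Fin n → MvPolynomial (Fin n) K) (i : Fin n) :
    (Δ H)^[m] P i
      = ((((bind₁ H).toLinearMap - 1) ^ m : Module.End K (MvPolynomial (Fin n) K))) (P i) := by
  induction m generalizing P with
  | zero => simp
  | succ m ih =>
      rw [Function.iterate_succ_apply, ih, pow_succ, Module.End.mul_apply]
      simp [Δ]

/-- the inverse of a Pascal finite polynomial automorphism is
Pascal finite. -/
theorem inverse_pascal_finite {K : Type*} [Field K] {n : ℕ}
    (F G : Fin n → MvPolynomial (Fin n) K)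
    (hinv₁ : PolyMap.comp F G = PolyMap.id K n)
    (hinv₂ : PolyMap.comp G F = PolyMap.id K n)
    (m : ℕ) (hm : 0 < m) (hPF : (Δ F)^[m] (PolyMap.id K n) = 0) :
    ∃ m' : ℕ, 0 < m' ∧ (Δ G)^[m'] (PolyMap.id K n) = 0 := by
  have hGF : (bind₁ G).toLinearMap * (bind₁ F).toLinearMap
      = (1 : Module.End K (MvPolynomial (Fin n) K)) := by
    refine LinearMap.ext fun p => ?_
    show bind₁ G (bind₁ F p) = p
    rw [bind₁_bind₁]
    have h1 : (fun i => bind₁ G (F i)) = (X : Fin n → MvPolynomial (Fin n) K) :=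
      funext fun i => by
        have h := congrFun hinv₁ i
        simp only [PolyMap.comp, PolyMap.id] at h
        exact h
    rw [h1, bind₁_X_left]
    rfl
  have hFG : (bind₁ F).toLinearMap * (bind₁ G).toLinearMap
      = (1 : Module.End K (MvPolynomial (Fin n) K)) := by
    refine LinearMap.ext fun p => ?_
    show bind₁ F (bind₁ G p) = p
    rw [bind₁_bind₁]
    have h1 : (fun i => bind₁ F (G i)) = (X : Fin n → MvPolynomial (Fin n) K) :=
      funext fun i => by
        have h := congrFun hinv₂ i
        simp only [PolyMap.comp, PolyMap.id] at h
        exact h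
    rw [h1, bind₁_X_left]
    rfl
  have hcomm : Commute (bind₁ G).toLinearMap (bind₁ F).toLinearMap := by
    unfold Commute SemiconjBy
    rw [hGF, hFG]
  have hc : Commute (-(bind₁ G).toLinearMap)
      ((bind₁ F).toLinearMap - (1 : Module.End K (MvPolynomial (Fin n) K))) :=
    (hcomm.sub_right (Commute.one_right _)).neg_left
  have hfact : (bind₁ G).toLinearMap - (1 : Module.End K (MvPolynomial (Fin n) K))
      = (-(bind₁ G).toLinearMap) * ((bind₁ F).toLinearMap - 1) :=
    end_sub_one_factor _ _ hGF
  refine ⟨m, hm, ?_⟩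
  funext i
  have hF0 : (((bind₁ F).toLinearMap - 1) ^ m : Module.End K (MvPolynomial (Fin n) K))
      (X i) = 0 := by
    have h := congrFun hPF i
    rw [delta_iter] at h
    exact h
  rw [Pi.zero_apply, delta_iter]
  show (((bind₁ G).toLinearMap - 1) ^ m : Module.End K (MvPolynomial (Fin n) K)) (X i) = 0
  rw [hfact, hc.mul_pow, Module.End.mul_apply, hF0, map_zero]
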